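/- Let X be a real Banach space, D ⊆ ℝᵐ a nonempty open convex set, and Ψ : D → X Fréchet differentiable with ‖Ψ'(p) − Ψ'(q)‖ ≤ C_L ‖p − q‖ for all p, q ∈ D. Suppose that for every p ∈ D there is a continuous linear map B(p) : X → ℝᵐ with B(p) ∘ Ψ'(p) = id on ℝᵐ and ‖B(p)‖ ≤ C_I. Let p† ∈ D and p⁰ ∈ D be such that, with ρ := ‖p† − p⁰‖, the closed ball of radius ρ around p† is contained in D and h := C_I C_L ρ / 2 < 1. Then the Gauss–Newton iterates p^{k+1} := p^k − B(p^k)(Ψ(p^k) − Ψ(p†)) are well defined, remain in the closed ball of radius ρ around p†, satisfy ‖p^{k+1} − p†‖ ≤ (C_I C_L/2)‖p^k − p†‖² and ‖p^k − p†‖ ≤ h^k ρ for all k ∈ ℕ, and hence converge quadratically to p†. -/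

import Mathlib

open Set

lemma taylor_quad {E X : Type*} [NormedAddCommGroup E] [NormedSpace ℝ E]
    [NormedAddCommGroup X] [NormedSpace ℝ X]
    {s : Set E} (hs : Convex ℝ s) {f : E → X} {f' : E → E →L[ℝ] X}
    (hd : ∀ z ∈ s, HasFDerivAt f (f' z) z) {C : ℝ}
    {x : E} (hx : x ∈ s) (hLip : ∀ z ∈ s, ‖f' z - f' x‖ ≤ C * ‖z - x‖)
    {y : E} (hy : y ∈ s) :
    ‖f y - f x - f' x (y - x)‖ ≤ C / 2 * ‖y - x‖ ^ 2 := by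
  set g : ℝ → X := fun t => f (x + t • (y - x)) - f x - t • (f' x (y - x)) with hg
  have hmem : ∀ t ∈ Icc (0:ℝ) 1, x + t • (y - x) ∈ s := fun t ht =>
    hs.add_smul_sub_mem hx hy ht
  have hgd : ∀ t ∈ Icc (0:ℝ) 1,
      HasDerivAt g ((f' (x + t • (y - x))) (y - x) - f' x (y - x)) t := by
    intro t ht
    have hline : HasDerivAt (fun t : ℝ => x + t • (y - x)) (y - x) t := by
      simpa using ((hasDerivAt_id t).smul_const (y - x)).const_add x
    have h1 : HasDerivAt (fun t : ℝ => f (x + t • (y - x)))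
        ((f' (x + t • (y - x))) (y - x)) t := by
      exact (hd _ (hmem t ht)).comp_hasDerivAt t hline
    have h2 : HasDerivAt (fun t : ℝ => t • (f' x (y - x))) (f' x (y - x)) t := by
      simpa using (hasDerivAt_id t).smul_const (f' x (y - x))
    exact (h1.sub_const (f x)).sub h2
  have key := image_norm_le_of_norm_deriv_right_le_deriv_boundary
    (f := g) (a := 0) (b := 1)
    (f' := fun t => (f' (x + t • (y - x))) (y - x) - f' x (y - x))
    (B := fun t => C / 2 * ‖y - x‖ ^ 2 * t ^ 2)
    (B' := fun t => C * ‖y - x‖ ^ 2 * t)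
    (fun t ht => (hgd t ht).continuousAt.continuousWithinAt)
    (fun t ht => (hgd t (Ico_subset_Icc_self ht)).hasDerivWithinAt)
    (by simp [hg])
    (by
      intro t
      have : HasDerivAt (fun t : ℝ => C / 2 * ‖y - x‖ ^ 2 * t ^ 2)
          (C / 2 * ‖y - x‖ ^ 2 * (2 * t)) t := by
        simpa using (hasDerivAt_pow 2 t).const_mul (C / 2 * ‖y - x‖ ^ 2)
      convert this using 1; ring)
    (by
      intro t ht
      have hz := hmem t (Ico_subset_Icc_self ht)
      calc ‖(f' (x + t • (y - x))) (y - x) - f' x (y - x)‖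
          = ‖(f' (x + t • (y - x)) - f' x) (y - x)‖ := by simp
        _ ≤ ‖f' (x + t • (y - x)) - f' x‖ * ‖y - x‖ :=
            ContinuousLinearMap.le_opNorm _ _
        _ ≤ (C * ‖x + t • (y - x) - x‖) * ‖y - x‖ := by
            exact mul_le_mul_of_nonneg_right (hLip _ hz) (norm_nonneg _)
        _ = C * ‖y - x‖ ^ 2 * t := by
            have : ‖x + t • (y - x) - x‖ = t * ‖y - x‖ := by
              simp [norm_smul, abs_of_nonneg ht.1]
            rw [this]; ring)
  have := key (right_mem_Icc.mpr zero_le_one)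
  simpa [hg] using this



/-- local quadratic convergence of the Gauss–Newton iteration
`p^{k+1} = p^k − B(p^k)(Ψ(p^k) − Ψ(p†))` when each `B(p)` is a uniformly bounded
left inverse of the Fréchet derivative `Ψ'(p)` and `Ψ'` is Lipschitz. -/
theorem stmt7 {X : Type*} [NormedAddCommGroup X] [NormedSpace ℝ X] [CompleteSpace X]
    {m : ℕ} (D : Set (EuclideanSpace ℝ (Fin m)))
    (hDne : D.Nonempty) (hDo : IsOpen D) (hDconv : Convex ℝ D)
    (Ψ : EuclideanSpace ℝ (Fin m) → X)
    (Ψ' : EuclideanSpace ℝ (Fin m) → (EuclideanSpace ℝ (Fin m) →L[ℝ] X))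
    (hderiv : ∀ p ∈ D, HasFDerivAt Ψ (Ψ' p) p)
    (C_L C_I : ℝ) (hCL : 0 < C_L) (hCI : 0 < C_I)
    (hLip : ∀ p ∈ D, ∀ q ∈ D, ‖Ψ' p - Ψ' q‖ ≤ C_L * ‖p - q‖)
    (B : EuclideanSpace ℝ (Fin m) → (X →L[ℝ] EuclideanSpace ℝ (Fin m)))
    (hBleft : ∀ p ∈ D, (B p).comp (Ψ' p) = ContinuousLinearMap.id ℝ (EuclideanSpace ℝ (Fin m)))
    (hBbound : ∀ p ∈ D, ‖B p‖ ≤ C_I)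
    (pdag : EuclideanSpace ℝ (Fin m)) (hpdag : pdag ∈ D)
    (p0 : EuclideanSpace ℝ (Fin m)) (hp0 : p0 ∈ D)
    (ρ : ℝ) (hρ : ρ = ‖pdag - p0‖)
    (hball : Metric.closedBall pdag ρ ⊆ D)
    (h : ℝ) (hh : h = C_I * C_L * ρ / 2) (hh1 : h < 1)
    (seq : ℕ → EuclideanSpace ℝ (Fin m))
    (hseq0 : seq 0 = p0)
    (hseqk : ∀ k, seq (k+1) = seq k - B (seq k) (Ψ (seq k) - Ψ pdag)) :
    (∀ k, seq k ∈ Metric.closedBall pdag ρ) ∧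
    (∀ k, ‖seq (k+1) - pdag‖ ≤ C_I * C_L / 2 * ‖seq k - pdag‖ ^ 2) ∧
    (∀ k, ‖seq k - pdag‖ ≤ h ^ k * ρ) ∧
    Filter.Tendsto seq Filter.atTop (nhds pdag) := by
  have hρ0 : 0 ≤ ρ := hρ ▸ norm_nonneg _
  have h0 : 0 ≤ h := by
    rw [hh]; positivity
  have hconv : Convex ℝ (Metric.closedBall pdag ρ) := convex_closedBall _ _
  -- key one-step estimate
  have key : ∀ p ∈ Metric.closedBall pdag ρ,
      ‖(p - B p (Ψ p - Ψ pdag)) - pdag‖ ≤ C_I * C_L / 2 * ‖p - pdag‖ ^ 2 := by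
    intro p hp
    have hpD : p ∈ D := hball hp
    have hpdagB : pdag ∈ Metric.closedBall pdag ρ := Metric.mem_closedBall_self hρ0
    have htay : ‖Ψ pdag - Ψ p - Ψ' p (pdag - p)‖ ≤ C_L / 2 * ‖pdag - p‖ ^ 2 :=
      taylor_quad hconv (fun z hz => hderiv z (hball hz))
        hp (fun z hz => hLip z (hball hz) p hpD) hpdagB
    have hBid : ∀ v, B p (Ψ' p v) = v := by
      intro v
      exact ContinuousLinearMap.ext_iff.mp (hBleft p hpD) v
    have heq : (p - B p (Ψ p - Ψ pdag)) - pdag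
        = B p (Ψ' p (p - pdag) - (Ψ p - Ψ pdag)) := by
      simp only [map_sub, hBid]
      abel
    rw [heq]
    calc ‖B p (Ψ' p (p - pdag) - (Ψ p - Ψ pdag))‖
        ≤ ‖B p‖ * ‖Ψ' p (p - pdag) - (Ψ p - Ψ pdag)‖ :=
          ContinuousLinearMap.le_opNorm _ _
      _ ≤ C_I * (C_L / 2 * ‖p - pdag‖ ^ 2) := by
          apply mul_le_mul (hBbound p hpD) _ (norm_nonneg _) hCI.le
          have : Ψ' p (p - pdag) - (Ψ p - Ψ pdag)
              = Ψ pdag - Ψ p - Ψ' p (pdag - p) := by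
            rw [map_sub, map_sub]; abel
          rw [this]
          calc ‖Ψ pdag - Ψ p - Ψ' p (pdag - p)‖ ≤ C_L / 2 * ‖pdag - p‖ ^ 2 := htay
            _ = C_L / 2 * ‖p - pdag‖ ^ 2 := by rw [norm_sub_rev]
      _ = C_I * C_L / 2 * ‖p - pdag‖ ^ 2 := by ring
  -- induction
  have main : ∀ k, seq k ∈ Metric.closedBall pdag ρ ∧ ‖seq k - pdag‖ ≤ h ^ k * ρ := by
    intro k
    induction k with
    | zero =>
      have hnorm : ‖seq 0 - pdag‖ = ρ := by
        rw [hseq0, norm_sub_rev, ← hρ]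
      constructor
      · rw [Metric.mem_closedBall, dist_eq_norm, hnorm]
      · rw [hnorm]; simp
    | succ k ih =>
      obtain ⟨hmem, hbd⟩ := ih
      have hek : ‖seq k - pdag‖ ≤ ρ := by
        rw [← dist_eq_norm]; exact hmem
      have step : ‖seq (k+1) - pdag‖ ≤ h * ‖seq k - pdag‖ := by
        calc ‖seq (k+1) - pdag‖ ≤ C_I * C_L / 2 * ‖seq k - pdag‖ ^ 2 := by
              rw [hseqk k]; exact key _ hmem
          _ = (C_I * C_L / 2 * ‖seq k - pdag‖) * ‖seq k - pdag‖ := by ring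
          _ ≤ (C_I * C_L / 2 * ρ) * ‖seq k - pdag‖ := by
              apply mul_le_mul_of_nonneg_right _ (norm_nonneg _)
              apply mul_le_mul_of_nonneg_left hek
              positivity
          _ = h * ‖seq k - pdag‖ := by rw [hh]; ring
      have hbd' : ‖seq (k+1) - pdag‖ ≤ h ^ (k+1) * ρ := by
        calc ‖seq (k+1) - pdag‖ ≤ h * ‖seq k - pdag‖ := step
          _ ≤ h * (h ^ k * ρ) := mul_le_mul_of_nonneg_left hbd h0
          _ = h ^ (k+1) * ρ := by ring
      refine ⟨?_, hbd'⟩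
      rw [Metric.mem_closedBall, dist_eq_norm]
      calc ‖seq (k+1) - pdag‖ ≤ h ^ (k+1) * ρ := hbd'
        _ ≤ 1 * ρ := mul_le_mul_of_nonneg_right
            (pow_le_one₀ h0 hh1.le) hρ0
        _ = ρ := one_mul ρ
  refine ⟨fun k => (main k).1, ?_, fun k => (main k).2, ?_⟩
  · intro k
    rw [hseqk k]
    exact key _ (main k).1
  · rw [tendsto_iff_norm_sub_tendsto_zero]
    apply squeeze_zero (fun k => norm_nonneg _) (fun k => (main k).2)
    have := (tendsto_pow_atTop_nhds_zero_of_lt_one h0 hh1).mul_const ρ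
    simpa using this
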